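/- Let μ ∈ ℝ, ε > 0, and for each n let μ̂ₙ be the sample mean of n i.i.d. 1-sub-Gaussian random variables with mean μ. Then ∑_{n=1}^∞ E[ e^{n(μ̂ₙ − μ + ε)²/2} · 1{μ̂ₙ < μ − ε} ] ≤ 1/(e^{ε²/2}−1) + (−log(1 − e^{-ε²/2}))/ε². -/

import Mathlib

open MeasureTheory ProbabilityTheory
open scoped ENNReal NNReal

lemma aux_expmeas (a c : ℝ) : Measurable fun x : ℝ => ENNReal.ofReal (Real.exp (-a * (x - c))) :=
  ENNReal.measurable_ofReal.comp (Real.measurable_exp.comp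
    ((measurable_id.sub_const c).const_mul (-a)))

lemma aux_lint_sum {Ω : Type*} [MeasureSpace Ω] [IsProbabilityMeasure (ℙ : Measure Ω)]
    (X : ℕ → Ω → ℝ) (hmeas : ∀ i, Measurable (X i))
    (hindep : iIndepFun X ℙ)
    (hident : ∀ i, IdentDistrib (X i) (X 0) ℙ ℙ) (μ a : ℝ) (m : ℕ) :
    ∫⁻ ω, ENNReal.ofReal (Real.exp (-a * ((∑ i ∈ Finset.range m, X i ω) - m * μ))) ∂ℙ
      = (∫⁻ ω, ENNReal.ofReal (Real.exp (-a * (X 0 ω - μ))) ∂ℙ) ^ m := by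
  induction m with
  | zero => simp
  | succ m ih =>
    have hsplit : ∀ ω : Ω,
        ENNReal.ofReal (Real.exp (-a * ((∑ i ∈ Finset.range (m+1), X i ω) - (m+1 : ℕ) * μ)))
        = ENNReal.ofReal (Real.exp (-a * ((∑ i ∈ Finset.range m, X i ω) - m * μ)))
          * ENNReal.ofReal (Real.exp (-a * (X m ω - μ))) := by
      intro ω
      rw [show (-a * ((∑ i ∈ Finset.range (m+1), X i ω) - ((m:ℕ)+1 : ℕ) * μ))
          = (-a * ((∑ i ∈ Finset.range m, X i ω) - m * μ)) + (-a * (X m ω - μ)) by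
        rw [Finset.sum_range_succ]; push_cast; ring]
      rw [Real.exp_add, ENNReal.ofReal_mul (Real.exp_nonneg _)]
    simp_rw [hsplit]
    have hind : IndepFun (fun ω => ENNReal.ofReal (Real.exp (-a * ((∑ i ∈ Finset.range m, X i ω) - m * μ))))
        (fun ω => ENNReal.ofReal (Real.exp (-a * (X m ω - μ)))) ℙ := by
      have base : IndepFun (∑ j ∈ Finset.range m, X j) (X m) ℙ :=
        hindep.indepFun_sum_range_succ hmeas m
      have := base.comp (aux_expmeas a ((m : ℝ) * μ)) (aux_expmeas a μ)
      have heq : (fun ω => ENNReal.ofReal (Real.exp (-a * ((∑ i ∈ Finset.range m, X i ω) - m*μ))))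
          = (fun x => ENNReal.ofReal (Real.exp (-a * (x - (m:ℝ)*μ)))) ∘ (∑ j ∈ Finset.range m, X j) := by
        funext ω; simp [Function.comp, Finset.sum_apply]
      rw [heq]; exact this
    have h1 : AEMeasurable (fun ω => ENNReal.ofReal (Real.exp (-a * ((∑ i ∈ Finset.range m, X i ω) - m * μ)))) ℙ := by
      exact ((aux_expmeas a _).comp (Finset.measurable_sum _ (fun i _ => hmeas i))).aemeasurable
    have h2 : AEMeasurable (fun ω => ENNReal.ofReal (Real.exp (-a * (X m ω - μ)))) ℙ := by
      exact ((aux_expmeas a μ).comp (hmeas m)).aemeasurable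
    rw [lintegral_mul_eq_lintegral_mul_lintegral_of_indepFun'' h1 h2 hind, ih]
    have hid : ∫⁻ ω, ENNReal.ofReal (Real.exp (-a * (X m ω - μ))) ∂ℙ
        = ∫⁻ ω, ENNReal.ofReal (Real.exp (-a * (X 0 ω - μ))) ∂ℙ := by
      rw [← lintegral_map (aux_expmeas a μ) (hmeas m), (hident m).map_eq,
        lintegral_map (aux_expmeas a μ) (hmeas 0)]
    rw [hid, pow_succ]

lemma aux_chernoff {Ω : Type*} [MeasureSpace Ω] [IsProbabilityMeasure (ℙ : Measure Ω)]
    (X : ℕ → Ω → ℝ) (hmeas : ∀ i, Measurable (X i))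
    (hindep : iIndepFun X ℙ)
    (hident : ∀ i, IdentDistrib (X i) (X 0) ℙ ℙ) (μ : ℝ)
    (hI : ∀ a : ℝ, 0 < a → ∫⁻ ω, ENNReal.ofReal (Real.exp (-a * (X 0 ω - μ))) ∂ℙ
      ≤ ENNReal.ofReal (Real.exp (a^2/2)))
    (m : ℕ) (s : ℝ) (hs : 0 < s) :
    ℙ {ω | ∑ i ∈ Finset.range m, X i ω ≤ m * (μ - s)}
      ≤ ENNReal.ofReal (Real.exp (-(m * s^2)/2)) := by
  set f : Ω → ℝ≥0∞ := fun ω =>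
    ENNReal.ofReal (Real.exp (-s * ((∑ i ∈ Finset.range m, X i ω) - m*μ))) with hf
  have hfm : Measurable f := by
    exact (aux_expmeas s _).comp (Finset.measurable_sum _ (fun i _ => hmeas i))
  have hsubset : {ω | ∑ i ∈ Finset.range m, X i ω ≤ m * (μ - s)}
      ⊆ {ω | ENNReal.ofReal (Real.exp (m * s^2)) ≤ f ω} := by
    intro ω hω
    simp only [Set.mem_setOf_eq] at hω ⊢
    apply ENNReal.ofReal_le_ofReal
    apply Real.exp_le_exp.2
    nlinarith
  have markov := mul_meas_ge_le_lintegral₀ (μ := (ℙ : Measure Ω)) hfm.aemeasurable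
    (ENNReal.ofReal (Real.exp (m * s^2)))
  rw [hf] at markov
  rw [aux_lint_sum X hmeas hindep hident μ s m] at markov
  have hpow : (∫⁻ ω, ENNReal.ofReal (Real.exp (-s * (X 0 ω - μ))) ∂ℙ) ^ m
      ≤ ENNReal.ofReal (Real.exp (m * s^2/2)) := by
    calc _ ≤ (ENNReal.ofReal (Real.exp (s^2/2))) ^ m := pow_le_pow_left' (hI s hs) m
    _ = ENNReal.ofReal (Real.exp (s^2/2) ^ m) := by
        rw [ENNReal.ofReal_pow (Real.exp_nonneg _)]
    _ = _ := by rw [← Real.exp_nat_mul]; ring_nf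
  have key : ENNReal.ofReal (Real.exp (m * s^2)) * ℙ {ω | ∑ i ∈ Finset.range m, X i ω ≤ m * (μ - s)}
      ≤ ENNReal.ofReal (Real.exp (m * s^2/2)) := by
    calc _ ≤ ENNReal.ofReal (Real.exp (m * s^2))
          * ℙ {ω | ENNReal.ofReal (Real.exp (m * s^2)) ≤ f ω} :=
        mul_le_mul_right (measure_mono hsubset) _
    _ ≤ _ := markov.trans hpow
  have hc0 : (ENNReal.ofReal (Real.exp (m * s^2))) ≠ 0 := by
    simp [Real.exp_pos]
  have hctop : (ENNReal.ofReal (Real.exp (m * s^2))) ≠ ⊤ := ENNReal.ofReal_ne_top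
  have := mul_le_mul_right key (ENNReal.ofReal (Real.exp (m * s^2)))⁻¹
  rw [← mul_assoc, ENNReal.inv_mul_cancel hc0 hctop, one_mul] at this
  refine this.trans ?_
  rw [← ENNReal.ofReal_inv_of_pos (Real.exp_pos _), ← Real.exp_neg,
    ← ENNReal.ofReal_mul (Real.exp_nonneg _), ← Real.exp_add]
  apply ENNReal.ofReal_le_ofReal
  apply Real.exp_le_exp.2
  nlinarith

lemma aux_texp_integrable {r : ℝ} (hr : 0 < r) :
    IntegrableOn (fun t : ℝ => t * Real.exp (-(r * t))) (Set.Ioi 0) := by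
  have h := integrableOn_rpow_mul_exp_neg_mul_rpow (s := 1) (p := 1)
    (by norm_num) one_pos hr
  refine (h.congr_fun (fun t ht => ?_) measurableSet_Ioi)
  simp [Real.rpow_one, neg_mul]

lemma aux_texp_integral {r : ℝ} (hr : 0 < r) :
    ∫ t in Set.Ioi (0:ℝ), t * Real.exp (-(r * t)) = 1/r^2 := by
  have h := Real.integral_rpow_mul_exp_neg_mul_Ioi (show (0:ℝ) < 2 by norm_num) hr
  rw [show (2:ℝ)-1 = 1 by norm_num] at h
  calc ∫ t in Set.Ioi (0:ℝ), t * Real.exp (-(r * t))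
      = ∫ t in Set.Ioi (0:ℝ), t ^ (1:ℝ) * Real.exp (-(r * t)) := by
        refine setIntegral_congr_fun measurableSet_Ioi fun t ht => ?_
        rw [Real.rpow_one]
  _ = (1/r) ^ (2:ℝ) * Real.Gamma 2 := h
  _ = 1/r^2 := by
      rw [Real.Gamma_two, mul_one, show ((2:ℝ)) = ((2:ℕ):ℝ) by norm_num,
        Real.rpow_natCast, div_pow, one_pow]

lemma aux_ftc (c x : ℝ) :
    ∫ t in (0:ℝ)..x, Real.exp (c*t^2/2) * (c*t) = Real.exp (c*x^2/2) - 1 := by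
  have hderiv : ∀ t : ℝ, HasDerivAt (fun u => Real.exp (c*u^2/2))
      (Real.exp (c*t^2/2) * (c*t)) t := by
    intro t
    have h1 : HasDerivAt (fun u : ℝ => c*u^2/2) (c*t) t := by
      have := ((hasDerivAt_pow 2 t).const_mul c).div_const 2
      refine this.congr_deriv ?_
      push_cast; ring
    exact h1.exp
  rw [intervalIntegral.integral_eq_sub_of_hasDerivAt (fun t _ => hderiv t)
      (Continuous.intervalIntegrable (by continuity) 0 x)]
  simp


lemma aux_bound_abstract {Ω : Type*} [MeasureSpace Ω] [IsProbabilityMeasure (ℙ : Measure Ω)]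
    (S : Ω → ℝ) (hSmeas : Measurable S) (μ ε mr : ℝ) (hε : 0 < ε) (hmrpos : 0 < mr)
    (tail : ∀ s : ℝ, 0 < s → ℙ {ω | S ω < μ - s} ≤ ENNReal.ofReal (Real.exp (-(mr * s^2)/2))) :
    ∫⁻ ω, ENNReal.ofReal (Set.indicator {ω | S ω < μ - ε}
        (fun ω => Real.exp (mr * (S ω - μ + ε) ^ 2 / 2)) ω) ∂ℙ
      ≤ ENNReal.ofReal (Real.exp (-(mr * ε^2)/2) * (1 + 1/(mr * ε^2))) := by
  set F : Ω → ℝ := fun ω => max (μ - ε - S ω) 0 with hF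
  have hFmeas : Measurable F := (measurable_const.sub hSmeas).max measurable_const
  have hFnn : ∀ ω, 0 ≤ F ω := fun ω => le_max_right _ _
  set A : Set Ω := {ω | S ω < μ - ε} with hA
  have hAmeas : MeasurableSet A := measurableSet_lt hSmeas measurable_const
  -- pointwise bound
  have hpt : ∀ ω, ENNReal.ofReal (Set.indicator A
      (fun ω => Real.exp (mr * (S ω - μ + ε) ^ 2 / 2)) ω)
      ≤ A.indicator (fun _ => (1:ℝ≥0∞)) ω + ENNReal.ofReal (Real.exp (mr * (F ω)^2/2) - 1) := by
    intro ω
    by_cases hω : ω ∈ A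
    · rw [Set.indicator_of_mem hω, Set.indicator_of_mem hω]
      have hT : 0 < μ - ε - S ω := by
        have : S ω < μ - ε := hω
        linarith
      have hFo : F ω = μ - ε - S ω := max_eq_left hT.le
      have heq : (S ω - μ + ε) ^ 2 = (F ω)^2 := by rw [hFo]; ring
      rw [heq]
      have h1 : Real.exp (mr * F ω ^2/2) = 1 + (Real.exp (mr * F ω^2/2) - 1) := by ring
      rw [h1, ENNReal.ofReal_add (by norm_num) (by
        have := Real.one_le_exp (by positivity : (0:ℝ) ≤ mr * F ω^2/2); linarith)]
      simp
    · rw [Set.indicator_of_notMem hω, Set.indicator_of_notMem hω]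
      have hFo : F ω = 0 := by
        have : ¬ (S ω < μ - ε) := hω
        rw [hF]
        simp only [max_eq_right_iff]
        linarith
      simp [hFo]
  -- split integral
  have hind1 : Measurable (fun ω => A.indicator (fun _ => (1:ℝ≥0∞)) ω) := by
    exact measurable_one.indicator hAmeas
  have step1 : ∫⁻ ω, ENNReal.ofReal (Set.indicator A
      (fun ω => Real.exp (mr * (S ω - μ + ε) ^ 2 / 2)) ω) ∂ℙ
      ≤ ℙ A + ∫⁻ ω, ENNReal.ofReal (Real.exp (mr * (F ω)^2/2) - 1) ∂ℙ := by
    calc _ ≤ ∫⁻ ω, (A.indicator (fun _ => (1:ℝ≥0∞)) ω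
        + ENNReal.ofReal (Real.exp (mr * (F ω)^2/2) - 1)) ∂ℙ := lintegral_mono hpt
    _ = _ := by
        rw [lintegral_add_left hind1]
        congr 1
        rw [lintegral_indicator hAmeas]
        simp
  have hgcont : Continuous (fun t : ℝ => Real.exp (mr*t^2/2) * (mr*t)) :=
    (Real.continuous_exp.comp ((continuous_const.mul (continuous_pow 2)).div_const 2)).mul
      (continuous_const.mul continuous_id)
  -- layer cake for the second term
  have hlc : ∫⁻ ω, ENNReal.ofReal (Real.exp (mr * (F ω)^2/2) - 1) ∂ℙ
      = ∫⁻ t in Set.Ioi (0:ℝ), ℙ {a | t < F a}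
          * ENNReal.ofReal (Real.exp (mr*t^2/2) * (mr*t)) := by
    have := lintegral_comp_eq_lintegral_meas_lt_mul (ℙ : Measure Ω)
      (Filter.Eventually.of_forall hFnn) hFmeas.aemeasurable
      (g := fun t => Real.exp (mr*t^2/2) * (mr*t))
      (fun t _ => hgcont.intervalIntegrable 0 t)
      (by
        filter_upwards [ae_restrict_mem measurableSet_Ioi] with t ht
        have : (0:ℝ) < t := ht
        positivity)
    rw [← this]
    congr 1
    funext ω
    rw [aux_ftc mr (F ω)]
  -- bound the tail integrand
  have hmeas2 : Measurable (fun t : ℝ => ENNReal.ofReal (t * Real.exp (-(mr*ε*t)))) := by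
    exact ENNReal.measurable_ofReal.comp (measurable_id.mul
      (Real.measurable_exp.comp ((measurable_id.const_mul (mr*ε)).neg)))
  have step2 : ∫⁻ t in Set.Ioi (0:ℝ), ℙ {a | t < F a}
        * ENNReal.ofReal (Real.exp (mr*t^2/2) * (mr*t))
      ≤ ∫⁻ t in Set.Ioi (0:ℝ),
          ENNReal.ofReal (Real.exp (-(mr*ε^2)/2) * mr) * ENNReal.ofReal (t * Real.exp (-(mr*ε*t))) := by
    refine setLIntegral_mono_ae (hmeas2.const_mul _).aemeasurable ?_
    filter_upwards with t ht
    have htpos : (0:ℝ) < t := ht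
    have hset : {a | t < F a} ⊆ {ω | S ω < μ - (ε + t)} := by
      intro ω hω
      simp only [Set.mem_setOf_eq] at hω ⊢
      have hlt : t < μ - ε - S ω := by
        rcases le_or_gt (μ - ε - S ω) 0 with h | h
        · exfalso
          have h0 : F ω = 0 := max_eq_right h
          rw [h0] at hω; linarith
        · have h0 : F ω = μ - ε - S ω := max_eq_left h.le
          rwa [h0] at hω
      linarith
    have htail := (measure_mono hset).trans (tail (ε + t) (by linarith))
    calc ℙ {a | t < F a} * ENNReal.ofReal (Real.exp (mr*t^2/2) * (mr*t))
        ≤ ENNReal.ofReal (Real.exp (-(mr * (ε+t)^2)/2))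
          * ENNReal.ofReal (Real.exp (mr*t^2/2) * (mr*t)) :=
          mul_le_mul_left htail _
      _ = ENNReal.ofReal (Real.exp (-(mr*ε^2)/2) * mr) * ENNReal.ofReal (t * Real.exp (-(mr*ε*t))) := by
          rw [← ENNReal.ofReal_mul (Real.exp_nonneg _), ← ENNReal.ofReal_mul (by positivity)]
          congr 1
          have e1 : Real.exp (-(mr * (ε+t)^2)/2) * Real.exp (mr*t^2/2)
              = Real.exp (-(mr*ε^2)/2) * Real.exp (-(mr*ε*t)) := by
            rw [← Real.exp_add, ← Real.exp_add]; congr 1; ring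
          calc Real.exp (-(mr * (ε+t)^2)/2) * (Real.exp (mr*t^2/2) * (mr*t))
              = (Real.exp (-(mr * (ε+t)^2)/2) * Real.exp (mr*t^2/2)) * (mr*t) := by ring
            _ = (Real.exp (-(mr*ε^2)/2) * Real.exp (-(mr*ε*t))) * (mr*t) := by rw [e1]
            _ = Real.exp (-(mr*ε^2)/2) * mr * (t * Real.exp (-(mr*ε*t))) := by ring
  -- compute the remaining integral
  have step3 : ∫⁻ t in Set.Ioi (0:ℝ),
      ENNReal.ofReal (Real.exp (-(mr*ε^2)/2) * mr) * ENNReal.ofReal (t * Real.exp (-(mr*ε*t)))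
      = ENNReal.ofReal (Real.exp (-(mr*ε^2)/2) * (1 / (mr * ε^2))) := by
    rw [lintegral_const_mul' _ _ ENNReal.ofReal_ne_top]
    have hint : ∫⁻ t in Set.Ioi (0:ℝ), ENNReal.ofReal (t * Real.exp (-(mr*ε*t)))
        = ENNReal.ofReal (1/(mr*ε)^2) := by
      rw [← ofReal_integral_eq_lintegral_ofReal (aux_texp_integrable (by positivity))
        (by
          filter_upwards [ae_restrict_mem measurableSet_Ioi] with t ht
          have : (0:ℝ) < t := ht
          positivity)]
      rw [aux_texp_integral (by positivity : (0:ℝ) < mr * ε)]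
    rw [hint, ← ENNReal.ofReal_mul (by positivity)]
    congr 1
    field_simp
  -- combine
  calc ∫⁻ ω, ENNReal.ofReal (Set.indicator A
        (fun ω => Real.exp (mr * (S ω - μ + ε) ^ 2 / 2)) ω) ∂ℙ
      ≤ ℙ A + ∫⁻ ω, ENNReal.ofReal (Real.exp (mr * (F ω)^2/2) - 1) ∂ℙ := step1
    _ ≤ ENNReal.ofReal (Real.exp (-(mr * ε^2)/2))
        + ENNReal.ofReal (Real.exp (-(mr*ε^2)/2) * (1 / (mr * ε^2))) := by
        refine add_le_add (tail ε hε) ?_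
        rw [hlc]
        exact step2.trans_eq step3
    _ = ENNReal.ofReal (Real.exp (-(mr * ε^2)/2) * (1 + 1/(mr * ε^2))) := by
        rw [← ENNReal.ofReal_add (Real.exp_nonneg _) (by positivity)]
        congr 1
        ring

lemma aux_bad {Ω : Type*} [MeasureSpace Ω] [IsProbabilityMeasure (ℙ : Measure Ω)]
    (X : ℕ → Ω → ℝ) (hmeas : ∀ i, Measurable (X i))
    (hindep : iIndepFun X ℙ)
    (hident : ∀ i, IdentDistrib (X i) (X 0) ℙ ℙ) (μ ε a : ℝ) (hε : 0 < ε) (ha : 0 < a)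
    (hinf : ∫⁻ ω, ENNReal.ofReal (Real.exp (-a * (X 0 ω - μ))) ∂ℙ = ⊤) (n : ℕ) :
    ∫⁻ ω, ENNReal.ofReal (Set.indicator
        {ω | (∑ i ∈ Finset.range (n + 1), X i ω) / (n + 1) < μ - ε}
        (fun ω => Real.exp (((n : ℝ) + 1)
          * ((∑ i ∈ Finset.range (n + 1), X i ω) / (n + 1) - μ + ε) ^ 2 / 2)) ω) ∂ℙ = ⊤ := by
  set m : ℕ := n + 1 with hm
  set mr : ℝ := (n : ℝ) + 1 with hmr
  have hmrpos : 0 < mr := by positivity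
  have hcast : ((m : ℕ) : ℝ) = mr := by push_cast [hm, hmr]; ring
  set c : ℝ≥0∞ := ENNReal.ofReal (Real.exp (-(mr*a^2/2) - mr*a*ε)) with hc
  have hc0 : c ≠ 0 := by simp [hc, Real.exp_pos]
  have hctop : c ≠ ⊤ := ENNReal.ofReal_ne_top
  have hpt : ∀ ω : Ω, c * ENNReal.ofReal (Real.exp (-a * ((∑ i ∈ Finset.range m, X i ω) - m*μ)))
      ≤ ENNReal.ofReal (Set.indicator
        {ω | (∑ i ∈ Finset.range m, X i ω) / mr < μ - ε}
        (fun ω => Real.exp (mr * ((∑ i ∈ Finset.range m, X i ω) / mr - μ + ε) ^ 2 / 2)) ω)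
        + c * ENNReal.ofReal (Real.exp (mr*a*ε)) := by
    intro ω
    by_cases hω : (∑ i ∈ Finset.range m, X i ω) / mr < μ - ε
    · refine le_trans ?_ le_self_add
      rw [Set.indicator_of_mem (by exact hω), hc, ← ENNReal.ofReal_mul (Real.exp_nonneg _),
        ← Real.exp_add]
      apply ENNReal.ofReal_le_ofReal
      apply Real.exp_le_exp.2
      rw [hcast]
      set Sv : ℝ := (∑ i ∈ Finset.range m, X i ω) / mr with hSv
      have hsum : (∑ i ∈ Finset.range m, X i ω) = mr * Sv := by rw [hSv]; field_simp
      rw [hsum]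
      nlinarith [sq_nonneg (Sv - μ + ε + a), hmrpos.le]
    · refine le_trans ?_ le_add_self
      apply mul_le_mul_right
      apply ENNReal.ofReal_le_ofReal
      apply Real.exp_le_exp.2
      rw [hcast]
      set Sv : ℝ := (∑ i ∈ Finset.range m, X i ω) / mr with hSv
      have hsum : (∑ i ∈ Finset.range m, X i ω) = mr * Sv := by rw [hSv]; field_simp
      rw [hsum]
      push_neg at hω
      nlinarith [mul_nonneg (mul_nonneg ha.le hmrpos.le) (by linarith : (0:ℝ) ≤ Sv - μ + ε)]
  have hlhs : ∫⁻ ω, c * ENNReal.ofReal (Real.exp (-a * ((∑ i ∈ Finset.range m, X i ω) - m*μ))) ∂ℙ = ⊤ := by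
    rw [lintegral_const_mul' _ _ hctop, aux_lint_sum X hmeas hindep hident μ a m, hinf,
      ENNReal.top_pow (by omega : m ≠ 0), ENNReal.mul_top hc0]
  have hle := lintegral_mono (μ := (ℙ : Measure Ω)) hpt
  rw [hlhs, lintegral_add_right _ measurable_const, lintegral_const, measure_univ, mul_one] at hle
  have : ∫⁻ ω, ENNReal.ofReal (Set.indicator
      {ω | (∑ i ∈ Finset.range m, X i ω) / mr < μ - ε}
      (fun ω => Real.exp (mr * ((∑ i ∈ Finset.range m, X i ω) / mr - μ + ε) ^ 2 / 2)) ω) ∂ℙ = ⊤ := by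
    by_contra hne
    exact absurd (top_le_iff.1 hle) (ENNReal.add_ne_top.2 ⟨hne, ENNReal.mul_ne_top hctop ENNReal.ofReal_ne_top⟩)
  exact this

/-- For i.i.d. `1`-sub-Gaussian variables with mean `μ` and any `ε > 0`,
`∑_{n=1}^∞ E[e^{n(μ̂ₙ - μ + ε)²/2} 1{μ̂ₙ < μ - ε}] ≤ 1/(e^{ε²/2}-1) + (-log(1-e^{-ε²/2}))/ε²`. -/
theorem stmt16 {Ω : Type*} [MeasureSpace Ω] [IsProbabilityMeasure (ℙ : Measure Ω)]
    (X : ℕ → Ω → ℝ) (μ ε : ℝ) (hε : 0 < ε)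
    (hmeas : ∀ i, Measurable (X i))
    (hindep : iIndepFun X ℙ)
    (hident : ∀ i, IdentDistrib (X i) (X 0) ℙ ℙ)
    (hmean : ∀ i, ∫ ω, X i ω ∂ℙ = μ)
    (hsub : ∀ i (l : ℝ), ∫ ω, Real.exp (l * (X i ω - μ)) ∂ℙ ≤ Real.exp (l ^ 2 / 2)) :
    (∑' n : ℕ, ∫ ω,
        Set.indicator {ω | (∑ i ∈ Finset.range (n + 1), X i ω) / (n + 1) < μ - ε}
          (fun ω => Real.exp (((n : ℝ) + 1)
            * ((∑ i ∈ Finset.range (n + 1), X i ω) / (n + 1) - μ + ε) ^ 2 / 2)) ω ∂ℙ)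
      ≤ 1 / (Real.exp (ε ^ 2 / 2) - 1) + (-Real.log (1 - Real.exp (-ε ^ 2 / 2))) / ε ^ 2 := by
  
  set r : ℝ := Real.exp (-ε ^ 2 / 2) with hrdef
  have hr0 : 0 < r := Real.exp_pos _
  have hε2 : (0:ℝ) < ε ^ 2 := by positivity
  have hr1 : r < 1 := by rw [hrdef, Real.exp_lt_one_iff]; linarith
  set B : ℕ → ℝ := fun n => r^(n+1) + (r^(n+1)/((n:ℝ)+1))/ε^2 with hBdef
  -- measurability facts
  have hSmeas : ∀ n : ℕ, Measurable (fun ω => (∑ i ∈ Finset.range (n+1), X i ω)/((n:ℝ)+1)) :=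
    fun n => (Finset.measurable_sum _ fun i _ => hmeas i).div_const _
  have hgmeas : ∀ n : ℕ, Measurable (fun ω => Set.indicator
      {ω | (∑ i ∈ Finset.range (n + 1), X i ω) / ((n:ℝ) + 1) < μ - ε}
      (fun ω => Real.exp (((n : ℝ) + 1)
        * ((∑ i ∈ Finset.range (n + 1), X i ω) / ((n:ℝ) + 1) - μ + ε) ^ 2 / 2)) ω) := by
    intro n
    exact Measurable.indicator
      (Real.measurable_exp.comp
        ((((((hSmeas n).sub_const μ).add_const ε).pow_const 2).const_mul ((n:ℝ)+1)).div_const 2))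
      (measurableSet_lt (hSmeas n) measurable_const)
  have hnn : ∀ n : ℕ, ∀ ω : Ω, 0 ≤ Set.indicator
      {ω | (∑ i ∈ Finset.range (n + 1), X i ω) / ((n:ℝ) + 1) < μ - ε}
      (fun ω => Real.exp (((n : ℝ) + 1)
        * ((∑ i ∈ Finset.range (n + 1), X i ω) / ((n:ℝ) + 1) - μ + ε) ^ 2 / 2)) ω :=
    fun n => Set.indicator_nonneg (fun ω _ => (Real.exp_pos _).le)
  -- the key term bound
  have hterm : ∀ n : ℕ, (∫ ω, Set.indicator
      {ω | (∑ i ∈ Finset.range (n + 1), X i ω) / ((n:ℝ) + 1) < μ - ε}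
      (fun ω => Real.exp (((n : ℝ) + 1)
        * ((∑ i ∈ Finset.range (n + 1), X i ω) / ((n:ℝ) + 1) - μ + ε) ^ 2 / 2)) ω ∂ℙ)
      ≤ B n := by
    intro n
    have hBpos : 0 < B n := by
      rw [hBdef]
      have : (0:ℝ) < (n:ℝ) + 1 := by positivity
      positivity
    have hBoch : (∫ ω, Set.indicator
        {ω | (∑ i ∈ Finset.range (n + 1), X i ω) / ((n:ℝ) + 1) < μ - ε}
        (fun ω => Real.exp (((n : ℝ) + 1)
          * ((∑ i ∈ Finset.range (n + 1), X i ω) / ((n:ℝ) + 1) - μ + ε) ^ 2 / 2)) ω ∂ℙ)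
        ≤ (∫⁻ ω, ENNReal.ofReal (Set.indicator
        {ω | (∑ i ∈ Finset.range (n + 1), X i ω) / ((n:ℝ) + 1) < μ - ε}
        (fun ω => Real.exp (((n : ℝ) + 1)
          * ((∑ i ∈ Finset.range (n + 1), X i ω) / ((n:ℝ) + 1) - μ + ε) ^ 2 / 2)) ω) ∂ℙ).toReal := by
      by_cases hInt : Integrable (fun ω => Set.indicator
          {ω | (∑ i ∈ Finset.range (n + 1), X i ω) / ((n:ℝ) + 1) < μ - ε}
          (fun ω => Real.exp (((n : ℝ) + 1)
            * ((∑ i ∈ Finset.range (n + 1), X i ω) / ((n:ℝ) + 1) - μ + ε) ^ 2 / 2)) ω) ℙ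
      · rw [integral_eq_lintegral_of_nonneg_ae (Filter.Eventually.of_forall (hnn n))
          (hgmeas n).aestronglyMeasurable]
      · rw [integral_undef hInt]
        exact ENNReal.toReal_nonneg
    by_cases hgood : ∀ a : ℝ, 0 < a →
        (∫⁻ ω, ENNReal.ofReal (Real.exp (-a * (X 0 ω - μ))) ∂ℙ)
          ≤ ENNReal.ofReal (Real.exp (a^2/2))
    · -- good case
      have tail : ∀ s : ℝ, 0 < s →
          ℙ {ω | (∑ i ∈ Finset.range (n+1), X i ω)/((n:ℝ)+1) < μ - s}
            ≤ ENNReal.ofReal (Real.exp (-(((n:ℝ)+1) * s^2)/2)) := by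
        intro s hs
        have hcast : (((n+1 : ℕ)) : ℝ) = (n:ℝ)+1 := by push_cast; ring
        have hsub2 : {ω | (∑ i ∈ Finset.range (n+1), X i ω)/((n:ℝ)+1) < μ - s}
            ⊆ {ω | ∑ i ∈ Finset.range (n+1), X i ω ≤ ((n+1:ℕ):ℝ) * (μ - s)} := by
          intro ω hω
          simp only [Set.mem_setOf_eq] at hω ⊢
          rw [hcast]
          have hpos : (0:ℝ) < (n:ℝ)+1 := by positivity
          rw [div_lt_iff₀ hpos] at hω
          nlinarith
        refine (measure_mono hsub2).trans ?_
        rw [show ((n:ℝ)+1) = ((n+1:ℕ):ℝ) by push_cast; ring]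
        exact aux_chernoff X hmeas hindep hident μ hgood (n+1) s hs
      have hlint := aux_bound_abstract
        (fun ω => (∑ i ∈ Finset.range (n+1), X i ω)/((n:ℝ)+1)) (hSmeas n)
        μ ε ((n:ℝ)+1) hε (by positivity) tail
      have hval : Real.exp (-(((n:ℝ)+1) * ε^2)/2) * (1 + 1/(((n:ℝ)+1) * ε^2)) = B n := by
        have hrm : Real.exp (-(((n:ℝ)+1)*ε^2)/2) = r^(n+1) := by
          rw [hrdef, ← Real.exp_nat_mul]
          congr 1
          push_cast
          ring
        rw [hrm, hBdef]
        field_simp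
      refine hBoch.trans ?_
      rw [← hval]
      refine ENNReal.toReal_le_of_le_ofReal (by positivity) ?_
      exact hlint
    · -- bad case
      push_neg at hgood
      obtain ⟨a, ha, hnot⟩ := hgood
      have hinf : ∫⁻ ω, ENNReal.ofReal (Real.exp (-a * (X 0 ω - μ))) ∂ℙ = ⊤ := by
        by_contra h'
        refine absurd hnot (not_lt.2 ?_)
        have hintg : Integrable (fun ω => Real.exp (-a * (X 0 ω - μ))) ℙ := by
          refine ⟨(Real.measurable_exp.comp
            ((((hmeas 0).sub_const μ)).const_mul (-a))).aestronglyMeasurable, ?_⟩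
          rw [hasFiniteIntegral_iff_ofReal (Filter.Eventually.of_forall
            (fun ω => (Real.exp_pos _).le))]
          exact lt_top_iff_ne_top.2 h'
        rw [← ofReal_integral_eq_lintegral_ofReal hintg
          (Filter.Eventually.of_forall (fun ω => (Real.exp_pos _).le))]
        refine ENNReal.ofReal_le_ofReal ?_
        simpa [neg_sq] using hsub 0 (-a)
      have htop := aux_bad X hmeas hindep hident μ ε a hε ha hinf n
      have hnotint : ¬ Integrable (fun ω => Set.indicator
          {ω | (∑ i ∈ Finset.range (n + 1), X i ω) / ((n:ℝ) + 1) < μ - ε}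
          (fun ω => Real.exp (((n : ℝ) + 1)
            * ((∑ i ∈ Finset.range (n + 1), X i ω) / ((n:ℝ) + 1) - μ + ε) ^ 2 / 2)) ω) ℙ := by
        intro hInt
        have := hInt.2
        rw [hasFiniteIntegral_iff_ofReal (Filter.Eventually.of_forall (hnn n))] at this
        rw [htop] at this
        exact absurd this (lt_irrefl _)
      rw [integral_undef hnotint]
      exact hBpos.le
  -- summation
  have hE : Real.exp (ε^2/2) * r = 1 := by
    rw [hrdef, ← Real.exp_add, show ε^2/2 + -ε^2/2 = 0 by ring, Real.exp_zero]
  have hEgt : 1 < Real.exp (ε^2/2) := by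
    nlinarith [Real.exp_pos (ε^2/2)]
  have h1 : HasSum (fun n : ℕ => r^(n+1)) (1/(Real.exp (ε^2/2) - 1)) := by
    have hg := (hasSum_geometric_of_lt_one hr0.le hr1).mul_left r
    have heq : (fun n : ℕ => r * r^n) = fun n => r^(n+1) := by
      funext n; rw [pow_succ]; ring
    rw [heq] at hg
    rw [show (1:ℝ)/(Real.exp (ε^2/2) - 1) = r * (1-r)⁻¹ from ?_]
    · exact hg
    have hE1 : Real.exp (ε^2/2) - 1 ≠ 0 := by linarith
    have hr1' : 1 - r ≠ 0 := by linarith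
    field_simp
    nlinarith [hE]
  have h2 : HasSum (fun n : ℕ => (r^(n+1)/((n:ℝ)+1))/ε^2) ((-Real.log (1-r))/ε^2) := by
    have := (Real.hasSum_pow_div_log_of_abs_lt_one
      (x := r) (by rw [abs_of_pos hr0]; exact hr1)).div_const (ε^2)
    convert this using 2 with n
  have hRHS : HasSum B (1 / (Real.exp (ε ^ 2 / 2) - 1) + (-Real.log (1 - r)) / ε ^ 2) :=
    h1.add h2
  have hsummable : Summable (fun n : ℕ => ∫ ω, Set.indicator
      {ω | (∑ i ∈ Finset.range (n + 1), X i ω) / ((n:ℝ) + 1) < μ - ε}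
      (fun ω => Real.exp (((n : ℝ) + 1)
        * ((∑ i ∈ Finset.range (n + 1), X i ω) / ((n:ℝ) + 1) - μ + ε) ^ 2 / 2)) ω ∂ℙ) :=
    Summable.of_nonneg_of_le (fun n => integral_nonneg (hnn n)) hterm hRHS.summable
  exact (Summable.tsum_le_tsum hterm hsummable hRHS.summable).trans_eq hRHS.tsum_eq
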